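/- arXiv:2502.13684 — 2 statements merged into one kernel-verified Lean document; each statement's English description precedes it below -/
import Mathlib

section
/- If f ∈ L¹(ℝⁿ) and the light ray transform Lf(x,θ) = ∫_ℝ f(x+tθ) dt vanishes for all x ∈ ℝⁿ and all θ = (θ',θ'') with |θ'| = |θ''| = 1, then f = 0 almost everywhere. -/
open MeasureTheory

open scoped FourierTransform RealInnerProductSpace SchwartzMap ComplexConjugate ContDiff

noncomputable section

namespace LightRayAux

/-! ### Gaussian integrals along lines -/

lemma gauss_integrable : Integrable (fun s : ℝ => Real.exp (-s ^ 2)) := by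
  simpa [neg_mul, one_mul] using integrable_exp_neg_mul_sq (b := 1) one_pos

lemma gauss_line_integrable (a : ℝ) :
    Integrable (fun t : ℝ => Real.exp (-(a - 2 * t) ^ 2)) := by
  have h1 : Integrable (fun s : ℝ => Real.exp (-(a - s) ^ 2)) :=
    gauss_integrable.comp_sub_left a
  simpa using h1.comp_mul_left' two_ne_zero

lemma gauss_line_integral (a : ℝ) :
    (∫ t : ℝ, Real.exp (-(a - 2 * t) ^ 2)) = Real.sqrt Real.pi / 2 := by
  have h1 : (∫ t : ℝ, Real.exp (-(a - 2 * t) ^ 2))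
      = |(2 : ℝ)⁻¹| • ∫ s : ℝ, Real.exp (-(a - s) ^ 2) :=
    Measure.integral_comp_mul_left (fun s : ℝ => Real.exp (-(a - s) ^ 2)) 2
  have h2 : (∫ s : ℝ, Real.exp (-(a - s) ^ 2))
      = ∫ s : ℝ, Real.exp (-s ^ 2) :=
    integral_sub_left_eq_self (fun s : ℝ => Real.exp (-s ^ 2)) volume a
  have h3 : (∫ s : ℝ, Real.exp (-s ^ 2)) = Real.sqrt Real.pi := by
    simpa [neg_mul, one_mul] using integral_gaussian 1
  rw [h1, h2, h3, smul_eq_mul]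
  rw [abs_of_pos (by norm_num : (0:ℝ) < 2⁻¹)]
  ring

/-! ### The shear map is measure preserving -/

def shear {N : ℕ} (θ : EuclideanSpace ℝ (Fin N)) :
    (EuclideanSpace ℝ (Fin N) × ℝ) ≃ᵐ (EuclideanSpace ℝ (Fin N) × ℝ) :=
  (Homeomorph.mk
    { toFun := fun p => (p.1 + p.2 • θ, p.2)
      invFun := fun p => (p.1 - p.2 • θ, p.2)
      left_inv := fun p => by simp
      right_inv := fun p => by simp }
    (by fun_prop) (by fun_prop)).toMeasurableEquiv

lemma shear_apply {N : ℕ} (θ : EuclideanSpace ℝ (Fin N)) (p : EuclideanSpace ℝ (Fin N) × ℝ) :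
    shear θ p = (p.1 + p.2 • θ, p.2) := rfl

lemma shear_measurePreserving {N : ℕ} (θ : EuclideanSpace ℝ (Fin N)) :
    MeasurePreserving (shear θ) volume volume := by
  have h1 : MeasurePreserving
      (fun q : ℝ × EuclideanSpace ℝ (Fin N) => (q.1, q.2 + q.1 • θ))
      ((volume : Measure ℝ).prod volume) ((volume : Measure ℝ).prod volume) :=
    (MeasurePreserving.id volume).skew_product (by fun_prop)
      (Filter.Eventually.of_forall fun t =>
        (measurePreserving_add_right volume (t • θ)).map_eq)
  have h2 := (Measure.measurePreserving_swap
      (μ := (volume : Measure ℝ)) (ν := (volume : Measure (EuclideanSpace ℝ (Fin N))))).comp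
    (h1.comp (Measure.measurePreserving_swap
      (μ := (volume : Measure (EuclideanSpace ℝ (Fin N)))) (ν := (volume : Measure ℝ))))
  rw [Measure.volume_eq_prod]
  exact h2

/-! ### Key lemma: vanishing line integrals in a fixed direction kill the total integral -/

lemma integral_eq_zero_of_line {N : ℕ} (h : EuclideanSpace ℝ (Fin N) → ℂ)
    (hh : Integrable h) (θ : EuclideanSpace ℝ (Fin N))
    (hθ : ⟪θ, θ⟫ = 2)
    (hline : ∀ x, (∫ t : ℝ, h (x + t • θ)) = 0) :
    (∫ x, h x) = 0 := by
  set G : EuclideanSpace ℝ (Fin N) × ℝ → ℂ :=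
    fun p => Real.exp (-(⟪p.1, θ⟫ - 2 * p.2) ^ 2) • h p.1 with hG
  have hwcont : Continuous
      fun p : EuclideanSpace ℝ (Fin N) × ℝ => Real.exp (-(⟪p.1, θ⟫ - 2 * p.2) ^ 2) :=
    Real.continuous_exp.comp <|
      (((continuous_fst.inner continuous_const).sub
        (continuous_const.mul continuous_snd)).pow 2).neg
  have hGmeas : AEStronglyMeasurable G
      ((volume : Measure (EuclideanSpace ℝ (Fin N))).prod (volume : Measure ℝ)) :=
    hwcont.aestronglyMeasurable.smul hh.aestronglyMeasurable.comp_fst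
  have hnorm : ∀ y t, ‖G (y, t)‖ = Real.exp (-(⟪y, θ⟫ - 2 * t) ^ 2) * ‖h y‖ := by
    intro y t
    rw [hG]
    simp only [norm_smul, Real.norm_eq_abs, abs_of_nonneg (Real.exp_nonneg _)]
  have hGint : Integrable G
      ((volume : Measure (EuclideanSpace ℝ (Fin N))).prod (volume : Measure ℝ)) := by
    rw [integrable_prod_iff hGmeas]
    constructor
    · exact Filter.Eventually.of_forall fun y =>
        (gauss_line_integrable ⟪y, θ⟫).smul_const (h y)
    · have heq : (fun y : EuclideanSpace ℝ (Fin N) => ∫ t : ℝ, ‖G (y, t)‖)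
          = fun y => (Real.sqrt Real.pi / 2) * ‖h y‖ := by
        funext y
        simp_rw [hnorm y]
        rw [integral_mul_const, gauss_line_integral]
      rw [heq]
      exact hh.norm.const_mul _
  have hGint' : Integrable G (volume : Measure (EuclideanSpace ℝ (Fin N) × ℝ)) := by
    rwa [Measure.volume_eq_prod]
  have hFint : Integrable
      (fun p : EuclideanSpace ℝ (Fin N) × ℝ =>
        Real.exp (-(⟪p.1, θ⟫) ^ 2) • h (p.1 + p.2 • θ))
      (volume : Measure (EuclideanSpace ℝ (Fin N) × ℝ)) := by
    have hcomp : (fun p : EuclideanSpace ℝ (Fin N) × ℝ =>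
        Real.exp (-(⟪p.1, θ⟫) ^ 2) • h (p.1 + p.2 • θ)) = G ∘ (shear θ) := by
      funext p
      have hip : ⟪p.1 + p.2 • θ, θ⟫ - 2 * p.2 = ⟪p.1, θ⟫ := by
        rw [inner_add_left, real_inner_smul_left, hθ]; ring
      simp only [Function.comp_apply, shear_apply, hG, hip]
    rw [hcomp]
    exact ((shear_measurePreserving θ).integrable_comp_emb
      (shear θ).measurableEmbedding).mpr hGint'
  have key : (0 : ℂ) = (Real.sqrt Real.pi / 2) • ∫ x, h x := by
    calc (0 : ℂ)
        = ∫ x : EuclideanSpace ℝ (Fin N),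
            Real.exp (-(⟪x, θ⟫) ^ 2) • (∫ t : ℝ, h (x + t • θ)) := by
          simp [hline]
      _ = ∫ x : EuclideanSpace ℝ (Fin N),
            ∫ t : ℝ, Real.exp (-(⟪x, θ⟫) ^ 2) • h (x + t • θ) := by
          congr 1; funext x; rw [integral_smul]
      _ = ∫ t : ℝ, ∫ x : EuclideanSpace ℝ (Fin N),
            Real.exp (-(⟪x, θ⟫) ^ 2) • h (x + t • θ) := by
          apply integral_integral_swap
          rwa [Measure.volume_eq_prod] at hFint
      _ = ∫ t : ℝ, ∫ y : EuclideanSpace ℝ (Fin N),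
            Real.exp (-(⟪y, θ⟫ - 2 * t) ^ 2) • h y := by
          congr 1; funext t
          rw [← integral_add_right_eq_self (μ := volume)
            (fun y : EuclideanSpace ℝ (Fin N) =>
              Real.exp (-(⟪y, θ⟫ - 2 * t) ^ 2) • h y) (t • θ)]
          congr 1; funext x
          have hip : ⟪x + t • θ, θ⟫ - 2 * t = ⟪x, θ⟫ := by
            rw [inner_add_left, real_inner_smul_left, hθ]; ring
          rw [hip]
      _ = ∫ y : EuclideanSpace ℝ (Fin N), ∫ t : ℝ,
            Real.exp (-(⟪y, θ⟫ - 2 * t) ^ 2) • h y := by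
          apply (integral_integral_swap _).symm
          exact hGint
      _ = ∫ y : EuclideanSpace ℝ (Fin N),
            (∫ t : ℝ, Real.exp (-(⟪y, θ⟫ - 2 * t) ^ 2)) • h y := by
          congr 1; funext y; rw [integral_smul_const]
      _ = (Real.sqrt Real.pi / 2) • ∫ y, h y := by
          simp_rw [gauss_line_integral]
          rw [integral_smul]
  have hc : (Real.sqrt Real.pi / 2) ≠ 0 := by positivity
  have := key.symm
  rcases smul_eq_zero.mp this with h' | h'
  · exact absurd h' hc
  · exact h'

/-! ### Existence of a unit vector orthogonal to a given vector (dim ≥ 2) -/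

lemma exists_unit_orthogonal {m : ℕ} (hm : 2 ≤ m) (ξ : EuclideanSpace ℝ (Fin m)) :
    ∃ θ : EuclideanSpace ℝ (Fin m), ‖θ‖ = 1 ∧ ⟪ξ, θ⟫ = 0 := by
  have hdim : Module.finrank ℝ (EuclideanSpace ℝ (Fin m)) = m := finrank_euclideanSpace_fin
  have hne : ((ℝ ∙ ξ)ᗮ : Submodule ℝ (EuclideanSpace ℝ (Fin m))) ≠ ⊥ := by
    intro hbot
    have htop : (ℝ ∙ ξ) = ⊤ := Submodule.orthogonal_eq_bot_iff.mp hbot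
    by_cases hξ : ξ = 0
    · rw [hξ, Submodule.span_zero_singleton] at htop
      have h0 : Module.finrank ℝ (⊥ : Submodule ℝ (EuclideanSpace ℝ (Fin m))) = 0 :=
        finrank_bot ℝ _
      rw [htop, finrank_top, hdim] at h0
      omega
    · have h1 : Module.finrank ℝ (ℝ ∙ ξ) = 1 := finrank_span_singleton hξ
      rw [htop, finrank_top, hdim] at h1
      omega
  obtain ⟨v, hv_mem, hv_ne⟩ := Submodule.exists_mem_ne_zero_of_ne_bot hne
  refine ⟨(‖v‖⁻¹ : ℝ) • v, norm_smul_inv_norm hv_ne, ?_⟩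
  rw [real_inner_smul_right]
  have hv0 : ⟪ξ, v⟫ = 0 :=
    (Submodule.mem_orthogonal _ v).mp hv_mem ξ (Submodule.mem_span_singleton_self ξ)
  rw [hv0, mul_zero]

/-! ### Compactly supported smooth functions are Schwartz -/

def ofCompactSupport {E F : Type*} [NormedAddCommGroup E] [NormedSpace ℝ E]
    [NormedAddCommGroup F] [NormedSpace ℝ F]
    (w : E → F) (hw : ContDiff ℝ ∞ w) (hsupp : HasCompactSupport w) : 𝓢(E, F) where
  toFun := w
  smooth' := hw
  decay' := by
    intro k n
    have hcont : Continuous fun x => ‖x‖ ^ k * ‖iteratedFDeriv ℝ n w x‖ :=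
      (continuous_norm.pow k).mul (hw.continuous_iteratedFDeriv (by exact_mod_cast le_top)).norm
    have hcs : HasCompactSupport fun x => ‖x‖ ^ k * ‖iteratedFDeriv ℝ n w x‖ := by
      have := ((hsupp.iteratedFDeriv (𝕜 := ℝ) (n := n)).norm).mul_left
        (f := fun x => ‖x‖ ^ k)
      exact this
    obtain ⟨C, hC⟩ := hcont.bounded_above_of_compact_support hcs
    refine ⟨C, fun x => ?_⟩
    have hx := hC x
    rwa [Real.norm_eq_abs, abs_of_nonneg (by positivity)] at hx

/-! ### Main auxiliary theorem on `EuclideanSpace`. -/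

theorem ae_zero_of_lines {N : ℕ} (g : EuclideanSpace ℝ (Fin N) → ℝ)
    (hg : Integrable g)
    (H : ∀ ξ : EuclideanSpace ℝ (Fin N), ∃ θ : EuclideanSpace ℝ (Fin N),
      ⟪θ, θ⟫ = 2 ∧ ⟪θ, ξ⟫ = 0 ∧ ∀ x, (∫ t : ℝ, g (x + t • θ)) = 0) :
    g =ᵐ[volume] 0 := by
  set gC : EuclideanSpace ℝ (Fin N) → ℂ := fun x => (g x : ℂ) with hgCdef
  have hgC : Integrable gC := hg.ofReal
  -- the Fourier transform of `gC` vanishes identically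
  have hFzero : ∀ ξ, 𝓕 gC ξ = 0 := by
    intro ξ
    obtain ⟨θ, hθ2, hθξ, hθline⟩ := H ξ
    rw [Real.fourier_eq]
    apply integral_eq_zero_of_line _ ?_ θ hθ2 ?_
    · exact (Real.fourierIntegral_convergent_iff ξ).2 hgC
    · intro x
      have hph : ∀ t : ℝ, (𝐞 (-⟪x + t • θ, ξ⟫) : Circle) = 𝐞 (-⟪x, ξ⟫) := by
        intro t; congr 1
        rw [inner_add_left, real_inner_smul_left, hθξ, mul_zero, add_zero]
      calc (∫ t : ℝ, 𝐞 (-⟪x + t • θ, ξ⟫) • gC (x + t • θ))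
          = ∫ t : ℝ, ((𝐞 (-⟪x, ξ⟫) : Circle) : ℂ) * gC (x + t • θ) := by
            congr 1; funext t; rw [hph t, Circle.smul_def, smul_eq_mul]
        _ = ((𝐞 (-⟪x, ξ⟫) : Circle) : ℂ) * ∫ t : ℝ, gC (x + t • θ) :=
            integral_const_mul _ _
        _ = 0 := by
            have h0 : (∫ t : ℝ, gC (x + t • θ)) = 0 := by
              have hoi : (∫ t : ℝ, gC (x + t • θ))
                  = Complex.ofReal (∫ t : ℝ, g (x + t • θ)) :=
                integral_ofReal (f := fun t : ℝ => g (x + t • θ))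
              rw [hoi, hθline x, Complex.ofReal_zero]
            rw [h0, mul_zero]
  -- test against smooth compactly supported functions
  apply ae_eq_zero_of_integral_contDiff_smul_eq_zero hg.locallyIntegrable
  intro u hu hcu
  have hsm : ContDiff ℝ ∞ fun x : EuclideanSpace ℝ (Fin N) => (u x : ℂ) :=
    Complex.ofRealCLM.contDiff.comp hu
  have hcs : HasCompactSupport fun x : EuclideanSpace ℝ (Fin N) => (u x : ℂ) :=
    hcu.comp_left (g := fun r : ℝ => (r : ℂ)) Complex.ofReal_zero
  set φS : 𝓢(EuclideanSpace ℝ (Fin N), ℂ) := ofCompactSupport _ hsm hcs with hφS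
  set ψ : 𝓢(EuclideanSpace ℝ (Fin N), ℂ) :=
    (FourierTransform.fourierCLE ℂ 𝓢(EuclideanSpace ℝ (Fin N), ℂ)).symm φS with hψdef
  have hψ : 𝓕 (⇑ψ) = ⇑φS := by
    have h1 : (FourierTransform.fourierCLE ℂ 𝓢(EuclideanSpace ℝ (Fin N), ℂ)) ψ = φS := by
      rw [hψdef]; exact (FourierTransform.fourierCLE ℂ 𝓢(EuclideanSpace ℝ (Fin N), ℂ)).apply_symm_apply φS
    have h2 := FourierTransform.fourierCLE_apply (R := ℂ) ψ
    rw [h1] at h2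
    exact congrArg (fun F : 𝓢(EuclideanSpace ℝ (Fin N), ℂ) => (⇑F)) h2.symm
  have hflip := VectorFourier.integral_fourierIntegral_smul_eq_flip
    (L := innerₗ (EuclideanSpace ℝ (Fin N)))
    Real.continuous_fourierChar continuous_inner hgC (ψ.integrable (μ := volume))
  rw [flip_innerₗ] at hflip
  have hLHS : (∫ ξ, (VectorFourier.fourierIntegral 𝐞 volume
      (innerₗ (EuclideanSpace ℝ (Fin N))) gC ξ) • (ψ ξ)) = 0 := by
    have : ∀ ξ, (VectorFourier.fourierIntegral 𝐞 volume
        (innerₗ (EuclideanSpace ℝ (Fin N))) gC ξ) = 0 := hFzero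
    simp [this]
  rw [hLHS] at hflip
  have h0 : (∫ x, gC x • (𝓕 (⇑ψ) x)) = 0 := by
    rw [show 𝓕 (⇑ψ) = VectorFourier.fourierIntegral 𝐞 volume
      (innerₗ (EuclideanSpace ℝ (Fin N))) (⇑ψ) from rfl]
    exact hflip.symm
  rw [hψ] at h0
  have h1 : (∫ x, ((u x * g x : ℝ) : ℂ)) = 0 := by
    rw [← h0]
    congr 1; funext x
    rw [hgCdef]
    show ((u x * g x : ℝ) : ℂ) = (g x : ℂ) • (φS x)
    have : φS x = (u x : ℂ) := rfl
    rw [this, smul_eq_mul]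
    push_cast
    ring
  have hoi2 : (∫ x, ((u x * g x : ℝ) : ℂ))
      = Complex.ofReal (∫ x, u x * g x) :=
    integral_ofReal (f := fun x => u x * g x)
  rw [hoi2] at h1
  have h2 : (∫ x, u x * g x) = 0 := by exact_mod_cast h1
  simpa [smul_eq_mul] using h2

end LightRayAux

end

open LightRayAux

/-- If `f ∈ L¹(ℝⁿ)` (`n = n' + n''`, `n', n'' ≥ 2`) and the light ray transform
`Lf(x,θ) = ∫ f(x+tθ) dt` vanishes for every `x` and every `θ = (θ',θ'')` with
`|θ'| = |θ''| = 1`, then `f = 0` almost everywhere. -/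
theorem stmt1 (n' n'' : ℕ) (hn' : 2 ≤ n') (hn'' : 2 ≤ n'')
    (f : EuclideanSpace ℝ (Fin n') × EuclideanSpace ℝ (Fin n'') → ℝ)
    (hf : Integrable f)
    (hL : ∀ (x θ : EuclideanSpace ℝ (Fin n') × EuclideanSpace ℝ (Fin n'')),
      ‖θ.1‖ = 1 → ‖θ.2‖ = 1 → ∫ t : ℝ, f (x + t • θ) = 0) :
    f =ᵐ[volume] 0 := by
  classical
  -- the coordinate-splitting measurable equivalence
  set TE : EuclideanSpace ℝ (Fin (n' + n'')) ≃ᵐ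
      (EuclideanSpace ℝ (Fin n') × EuclideanSpace ℝ (Fin n'')) :=
    ((MeasurableEquiv.toLp 2 (Fin (n' + n'') → ℝ)).symm).trans <|
      (MeasurableEquiv.piCongrLeft (fun _ : Fin n' ⊕ Fin n'' => ℝ) finSumFinEquiv.symm).trans <|
        (MeasurableEquiv.sumPiEquivProdPi (fun _ : Fin n' ⊕ Fin n'' => ℝ)).trans
          (((MeasurableEquiv.toLp 2 (Fin n' → ℝ)).symm).symm.prodCongr
            ((MeasurableEquiv.toLp 2 (Fin n'' → ℝ)).symm).symm) with hTEdef
  have hT : MeasurePreserving TE volume volume := by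
    have h1 := EuclideanSpace.volume_preserving_symm_measurableEquiv_toLp (Fin (n' + n''))
    have h2 := volume_measurePreserving_piCongrLeft (fun _ : Fin n' ⊕ Fin n'' => ℝ)
      finSumFinEquiv.symm
    have h3 := volume_measurePreserving_sumPiEquivProdPi (fun _ : Fin n' ⊕ Fin n'' => ℝ)
    have h4 := ((EuclideanSpace.volume_preserving_symm_measurableEquiv_toLp (Fin n')).symm _).prod
      ((EuclideanSpace.volume_preserving_symm_measurableEquiv_toLp (Fin n'')).symm _)
    have h5 := ((h4.comp h3).comp h2).comp h1
    rw [hTEdef, Measure.volume_eq_prod]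
    exact h5
  -- coordinates of `TE`
  have hTE : ∀ x : EuclideanSpace ℝ (Fin (n' + n'')),
      TE x = ((WithLp.toLp 2 (fun i => x (Fin.castAdd n'' i)) : EuclideanSpace ℝ (Fin n')),
        (WithLp.toLp 2 (fun j => x (Fin.natAdd n' j)) : EuclideanSpace ℝ (Fin n''))) := by
    intro x
    have base : ∀ k : Fin n' ⊕ Fin n'',
        (Equiv.piCongrLeft (fun _ : Fin n' ⊕ Fin n'' => ℝ) finSumFinEquiv.symm)
          (fun j => x j) k = x (finSumFinEquiv k) := by
      intro k
      have h := Equiv.piCongrLeft_apply_apply (P := fun _ : Fin n' ⊕ Fin n'' => ℝ)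
        (e := finSumFinEquiv.symm) (fun j => x j) (finSumFinEquiv k)
      rw [Equiv.symm_apply_apply] at h
      exact h
    refine Prod.ext ?_ ?_
    · ext i
      show (Equiv.piCongrLeft (fun _ : Fin n' ⊕ Fin n'' => ℝ) finSumFinEquiv.symm)
        (fun j => x j) (Sum.inl i) = x (Fin.castAdd n'' i)
      rw [base (Sum.inl i)]
      simp
    · ext j
      show (Equiv.piCongrLeft (fun _ : Fin n' ⊕ Fin n'' => ℝ) finSumFinEquiv.symm)
        (fun j => x j) (Sum.inr j) = x (Fin.natAdd n' j)
      rw [base (Sum.inr j)]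
      simp
  -- linearity of `TE` along lines
  have hTE_lin : ∀ (x y : EuclideanSpace ℝ (Fin (n' + n''))) (t : ℝ),
      TE (x + t • y) = TE x + t • TE y := by
    intro x y t
    rw [hTE, hTE, hTE]
    refine Prod.ext ?_ ?_
    · ext i
      simp [PiLp.add_apply, PiLp.smul_apply, smul_eq_mul]
    · ext j
      simp [PiLp.add_apply, PiLp.smul_apply, smul_eq_mul]
  -- inner product splitting
  have hinner : ∀ a b : EuclideanSpace ℝ (Fin (n' + n'')),
      ⟪a, b⟫ = ⟪(TE a).1, (TE b).1⟫ + ⟪(TE a).2, (TE b).2⟫ := by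
    intro a b
    rw [hTE a, hTE b]
    simp only [PiLp.inner_apply, RCLike.inner_apply, conj_trivial]
    exact Fin.sum_univ_add (fun i => b i * a i)
  -- pull back `f` to Euclidean space
  set g : EuclideanSpace ℝ (Fin (n' + n'')) → ℝ := fun x => f (TE x) with hgdef
  have hgI : Integrable g := by
    exact (hT.integrable_comp_emb TE.measurableEmbedding).mpr hf
  have hgae : g =ᵐ[volume] 0 := by
    apply ae_zero_of_lines g hgI
    intro ξ
    obtain ⟨θ₁, hθ₁n, hθ₁o⟩ := exists_unit_orthogonal hn' (TE ξ).1
    obtain ⟨θ₂, hθ₂n, hθ₂o⟩ := exists_unit_orthogonal hn'' (TE ξ).2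
    set θ : EuclideanSpace ℝ (Fin (n' + n'')) := TE.symm (θ₁, θ₂) with hθdef
    have hTEθ : TE θ = (θ₁, θ₂) := TE.apply_symm_apply _
    refine ⟨θ, ?_, ?_, ?_⟩
    · rw [hinner θ θ, hTEθ]
      have e1 : ⟪θ₁, θ₁⟫ = 1 := by
        rw [real_inner_self_eq_norm_mul_norm, hθ₁n]; norm_num
      have e2 : ⟪θ₂, θ₂⟫ = 1 := by
        rw [real_inner_self_eq_norm_mul_norm, hθ₂n]; norm_num
      simp only [e1, e2]
      norm_num
    · rw [hinner θ ξ, hTEθ]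
      have e1 : ⟪θ₁, (TE ξ).1⟫ = 0 := by rw [real_inner_comm]; exact hθ₁o
      have e2 : ⟪θ₂, (TE ξ).2⟫ = 0 := by rw [real_inner_comm]; exact hθ₂o
      simp [e1, e2]
    · intro x
      have : ∀ t : ℝ, g (x + t • θ) = f (TE x + t • (θ₁, θ₂)) := by
        intro t
        rw [hgdef]
        simp only
        rw [hTE_lin x θ t, hTEθ]
      simp_rw [this]
      exact hL (TE x) (θ₁, θ₂) hθ₁n hθ₂n
  -- transfer back
  have hmap : Measure.map TE volume = volume := hT.map_eq
  have : ∀ᵐ y ∂(volume : Measure (EuclideanSpace ℝ (Fin n') × EuclideanSpace ℝ (Fin n''))),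
      f y = 0 := by
    rw [← hmap, MeasurableEmbedding.ae_map_iff TE.measurableEmbedding]
    exact hgae
  exact this
end

section
/- Let a, b, c be real with c > 0 not a nonpositive integer and c - a - b > 0. Then the hypergeometric series ₂F₁(a,b;c;z) = Σ_{k≥0} (a)_k(b)_k z^k / ((c)_k k!) converges absolutely for |z| ≤ 1, and ₂F₁(a,b;c;1) = Γ(c)Γ(c-a-b)/(Γ(c-a)Γ(c-b)) (Gauss's theorem). -/
set_option maxHeartbeats 1000000

open Filter Topology Finset

namespace Stmt17Aux

noncomputable def P (x : ℝ) (k : ℕ) : ℝ := (ascPochhammer ℝ k).eval x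

lemma P_zero (x : ℝ) : P x 0 = 1 := by simp [P]

lemma P_succ (x : ℝ) (k : ℕ) : P x (k + 1) = P x k * (x + k) :=
  ascPochhammer_succ_eval k x

lemma P_pos {x : ℝ} (hx : 0 < x) (k : ℕ) : 0 < P x k := by
  induction k with
  | zero => simp [P_zero]
  | succ k ih =>
    rw [P_succ]
    have : (0:ℝ) < x + k := by positivity
    exact mul_pos ih this

lemma P_shift (c : ℝ) (k : ℕ) : c * P (c + 1) k = P c k * (c + k) := by
  induction k with
  | zero => simp [P_zero]
  | succ k ih =>
    rw [P_succ, P_succ]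
    push_cast
    linear_combination (c + 1 + (k:ℝ)) * ih

/-- For `0 < x ≤ y`, `y * (x)_{k+1} ≤ x * (y)_{k+1}`. -/
lemma P_compare {x y : ℝ} (hx : 0 < x) (hxy : x ≤ y) (k : ℕ) :
    y * P x (k + 1) ≤ x * P y (k + 1) := by
  induction k with
  | zero => simp [P_succ, P_zero]; nlinarith
  | succ k ih =>
    rw [P_succ x (k + 1), P_succ y (k + 1)]
    have h1 : (0:ℝ) < x + (k + 1 : ℕ) := by positivity
    have h2 : x + (k + 1 : ℕ) ≤ y + (k + 1 : ℕ) := by linarith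
    have h3 : 0 < P x (k + 1) := P_pos hx _
    have h4 : 0 < P y (k + 1) := P_pos (lt_of_lt_of_le hx hxy) _
    calc y * (P x (k + 1) * (x + (k + 1 : ℕ))) = y * P x (k + 1) * (x + (k + 1 : ℕ)) := by ring
      _ ≤ x * P y (k + 1) * (x + (k + 1 : ℕ)) := by
          exact mul_le_mul_of_nonneg_right ih (le_of_lt h1)
      _ ≤ x * P y (k + 1) * (y + (k + 1 : ℕ)) := by
          have : 0 ≤ x * P y (k + 1) := by positivity
          exact mul_le_mul_of_nonneg_left h2 this
      _ = x * (P y (k + 1) * (y + (k + 1 : ℕ))) := by ring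

noncomputable def T (a b c : ℝ) (k : ℕ) : ℝ :=
  P a k * P b k / (P c k * (k.factorial : ℝ))

lemma T_zero (a b c : ℝ) : T a b c 0 = 1 := by simp [T, P_zero]

lemma T_succ (a b c : ℝ) (hc : 0 < c) (k : ℕ) :
    T a b c (k + 1) = T a b c k * ((a + k) * (b + k) / ((c + k) * (k + 1))) := by
  have hck : (c + (k:ℝ)) ≠ 0 := by positivity
  have hfac : ((k.factorial : ℝ)) ≠ 0 := by positivity
  have hPc : P c k ≠ 0 := ne_of_gt (P_pos hc k)
  have hk1 : ((k:ℝ) + 1) ≠ 0 := by positivity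
  rw [T, T, P_succ, P_succ, P_succ, Nat.factorial_succ]
  push_cast
  field_simp

lemma T_shift (a b c : ℝ) (hc : 0 < c) (k : ℕ) :
    T a b (c + 1) k = T a b c k * (c / (c + k)) := by
  have hck : (c + (k:ℝ)) ≠ 0 := by positivity
  have hfac : ((k.factorial : ℝ)) ≠ 0 := by positivity
  have hPc : P c k ≠ 0 := ne_of_gt (P_pos hc k)
  have hPc1 : P (c + 1) k ≠ 0 := ne_of_gt (P_pos (by linarith) k)
  have hs := P_shift c k
  rw [T, T]
  field_simp
  linear_combination (-(P a k * P b k)) * hs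

lemma exists_bound (a b c : ℝ) (hc : 0 < c) (hcab : 0 < c - a - b) :
    ∃ r C : ℝ, 1 < r ∧ 0 < C ∧ ∀ k : ℕ, 1 ≤ k → |T a b c k| * (k:ℝ) ^ r ≤ C := by
  obtain ⟨r, hr1, hδ0⟩ : ∃ r : ℝ, 1 < r ∧ 0 < c + 1 - a - b - r := by
    refine ⟨1 + min (c - a - b) 1 / 2, ?_, ?_⟩
    · have := lt_min hcab one_pos
      linarith
    · have h1 : min (c - a - b) 1 ≤ c - a - b := min_le_left _ _
      have h2 : 0 < min (c - a - b) 1 := lt_min hcab one_pos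
      linarith
  set E : ℝ := |a * b - c * (1 - r)| / (c + 1 - a - b - r) with hE_def
  have hE : 0 ≤ E := by positivity
  obtain ⟨N, hN1, hNW⟩ : ∃ N : ℕ, 1 ≤ N ∧ |a| + |b| + |c| + r + E ≤ (N : ℝ) := by
    refine ⟨⌈|a| + |b| + |c| + r + E⌉₊ + 1, by omega, ?_⟩
    calc |a| + |b| + |c| + r + E ≤ (⌈|a| + |b| + |c| + r + E⌉₊ : ℝ) := Nat.le_ceil _
      _ ≤ ((⌈|a| + |b| + |c| + r + E⌉₊ + 1 : ℕ) : ℝ) := by exact_mod_cast Nat.le_succ _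
  -- facts for k ≥ N
  have hfacts : ∀ k : ℕ, N ≤ k → 0 < a + (k:ℝ) ∧ 0 < b + (k:ℝ) ∧ r ≤ (k:ℝ) ∧
      (a + (k:ℝ)) * (b + (k:ℝ)) ≤ (c + (k:ℝ)) * ((k:ℝ) + 1 - r) := by
    intro k hk
    have hxk : |a| + |b| + |c| + r + E ≤ (k:ℝ) := le_trans hNW (by exact_mod_cast hk)
    have hr0 : 0 < r := by linarith
    have h1 := neg_abs_le a
    have h2 := neg_abs_le b
    have h3 := abs_nonneg a
    have h4 := abs_nonneg b
    have h5 := abs_nonneg c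
    refine ⟨by linarith, by linarith, by linarith, ?_⟩
    have hkE : E ≤ (k:ℝ) := by linarith
    have h6 : |a * b - c * (1 - r)| = E * (c + 1 - a - b - r) := by
      rw [hE_def, div_mul_cancel₀ _ (ne_of_gt hδ0)]
    have h7 : a * b - c * (1 - r) ≤ E * (c + 1 - a - b - r) :=
      h6 ▸ le_abs_self _
    nlinarith [h7, mul_le_mul_of_nonneg_right hkE (le_of_lt hδ0)]
  -- one-step inequality
  have hstep : ∀ k : ℕ, N ≤ k → |T a b c (k+1)| * ((k:ℝ)+1) ^ r ≤ |T a b c k| * (k:ℝ) ^ r := by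
    intro k hk
    obtain ⟨ha, hb, hrk, hineq⟩ := hfacts k hk
    have hk0 : (0:ℝ) < (k:ℝ) := by
      have h1 : (1:ℕ) ≤ k := le_trans hN1 hk
      have h2 : (1:ℝ) ≤ (k:ℝ) := by exact_mod_cast h1
      linarith
    have hck : (0:ℝ) < c + k := by positivity
    have hk1 : (0:ℝ) < (k:ℝ) + 1 := by linarith
    have hq0 : 0 ≤ (a + (k:ℝ)) * (b + k) / ((c + k) * (k + 1)) := by positivity
    have habs : |T a b c (k+1)| = |T a b c k| * ((a + (k:ℝ)) * (b + k) / ((c + k) * (k + 1))) := by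
      rw [T_succ a b c hc k, abs_mul, abs_of_nonneg hq0]
    have hq1 : (a + (k:ℝ)) * (b + k) / ((c + k) * (k + 1)) ≤ ((k:ℝ) + 1 - r) / ((k:ℝ) + 1) := by
      rw [div_le_div_iff₀ (by positivity) hk1]
      have := mul_le_mul_of_nonneg_right hineq (le_of_lt hk1)
      nlinarith [this]
    have hbern : ((k:ℝ) + 1 - r) / ((k:ℝ) + 1) ≤ ((k:ℝ) / ((k:ℝ)+1)) ^ r := by
      have hs : (-1:ℝ) ≤ -(1 / ((k:ℝ)+1)) := by
        rw [neg_le_neg_iff, div_le_one hk1]; linarith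
      have hber := one_add_mul_self_le_rpow_one_add hs (le_of_lt hr1)
      have he1 : (1:ℝ) + -(1 / ((k:ℝ)+1)) = (k:ℝ)/((k:ℝ)+1) := by field_simp; ring
      have he2 : (1:ℝ) + r * -(1 / ((k:ℝ)+1)) = ((k:ℝ) + 1 - r)/((k:ℝ)+1) := by
        field_simp; ring
      rw [he1, he2] at hber
      exact hber
    have hq : (a + (k:ℝ)) * (b + k) / ((c + k) * (k + 1)) ≤ ((k:ℝ) / ((k:ℝ)+1)) ^ r :=
      le_trans hq1 hbern
    calc |T a b c (k+1)| * ((k:ℝ)+1) ^ r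
        = |T a b c k| * ((a + (k:ℝ)) * (b + k) / ((c + k) * (k + 1))) * ((k:ℝ)+1) ^ r := by
          rw [habs]
      _ ≤ |T a b c k| * (((k:ℝ) / ((k:ℝ)+1)) ^ r) * ((k:ℝ)+1) ^ r := by
          have h1 : (0:ℝ) ≤ ((k:ℝ)+1) ^ r := le_of_lt (Real.rpow_pos_of_pos hk1 r)
          exact mul_le_mul_of_nonneg_right
            (mul_le_mul_of_nonneg_left hq (abs_nonneg _)) h1
      _ = |T a b c k| * (k:ℝ) ^ r := by
          rw [mul_assoc, ← Real.mul_rpow (by positivity) (by positivity),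
            div_mul_cancel₀ _ (ne_of_gt hk1)]
  have hind : ∀ k : ℕ, N ≤ k → |T a b c k| * (k:ℝ) ^ r ≤ |T a b c N| * (N:ℝ) ^ r := by
    intro k hk
    obtain ⟨j, rfl⟩ := Nat.exists_eq_add_of_le hk
    induction j with
    | zero => simp
    | succ j ih =>
      have h1 : N ≤ N + j := Nat.le_add_right _ _
      have h2 : N + (j+1) = (N + j) + 1 := by omega
      rw [h2]
      have hc1 : (((N + j) + 1 : ℕ):ℝ) = ((N + j : ℕ):ℝ) + 1 := by push_cast; ring
      rw [hc1]
      exact le_trans (hstep (N + j) h1) (ih h1)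
  refine ⟨r, (∑ k ∈ Finset.range (N + 1), |T a b c k| * (k:ℝ) ^ r) + 1, hr1, ?_, ?_⟩
  · have : 0 ≤ ∑ k ∈ Finset.range (N + 1), |T a b c k| * (k:ℝ) ^ r :=
      Finset.sum_nonneg fun k _ => by positivity
    linarith
  · intro k hk
    rcases le_or_gt k N with h | h
    · have hmem : k ∈ Finset.range (N + 1) := Finset.mem_range.mpr (by omega)
      have h3 := Finset.single_le_sum (f := fun k => |T a b c k| * (k:ℝ) ^ r)
        (fun k _ => by positivity) hmem
      linarith
    · have h1 := hind k (le_of_lt h)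
      have hmem : N ∈ Finset.range (N + 1) := Finset.mem_range.mpr (by omega)
      have h2 := Finset.single_le_sum (f := fun k => |T a b c k| * (k:ℝ) ^ r)
        (fun k _ => by positivity) hmem
      linarith
lemma summable_abs_T (a b c : ℝ) (hc : 0 < c) (hcab : 0 < c - a - b) :
    Summable fun k => |T a b c k| := by
  obtain ⟨r, C, hr1, hC0, hbd⟩ := exists_bound a b c hc hcab
  rw [← summable_nat_add_iff 1]
  have hsum : Summable fun k : ℕ => C * (1 / ((k + 1 : ℕ):ℝ) ^ r) := by
    apply Summable.mul_left
    exact (summable_nat_add_iff (f := fun n : ℕ => 1 / (n:ℝ) ^ r) 1).mpr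
      (Real.summable_one_div_nat_rpow.mpr hr1)
  apply Summable.of_nonneg_of_le (fun k => abs_nonneg _) _ hsum
  intro k
  have hk1 : (0:ℝ) < ((k + 1 : ℕ):ℝ) := by positivity
  have hb := hbd (k + 1) (by omega)
  have hpow : (0:ℝ) < ((k + 1 : ℕ):ℝ) ^ r := Real.rpow_pos_of_pos hk1 r
  calc |T a b c (k + 1)| = (|T a b c (k + 1)| * ((k + 1 : ℕ):ℝ) ^ r) / ((k + 1 : ℕ):ℝ) ^ r := by
        field_simp
    _ ≤ C / ((k + 1 : ℕ):ℝ) ^ r := div_le_div_of_nonneg_right hb (le_of_lt hpow)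
    _ = C * (1 / ((k + 1 : ℕ):ℝ) ^ r) := by ring

lemma summable_T (a b c : ℝ) (hc : 0 < c) (hcab : 0 < c - a - b) :
    Summable (T a b c) := (summable_abs_T a b c hc hcab).of_abs

lemma tendsto_mul_T (a b c : ℝ) (hc : 0 < c) (hcab : 0 < c - a - b) :
    Tendsto (fun k : ℕ => (k:ℝ) * T a b c k) atTop (𝓝 0) := by
  obtain ⟨r, C, hr1, hC0, hbd⟩ := exists_bound a b c hc hcab
  apply squeeze_zero_norm' (a := fun k : ℕ => C * (k:ℝ) ^ (1 - r))
  · filter_upwards [eventually_ge_atTop 1] with k hk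
    have hk0 : (0:ℝ) < (k:ℝ) := by exact_mod_cast Nat.lt_of_lt_of_le Nat.zero_lt_one hk
    have hb := hbd k hk
    have h1 : ‖(k:ℝ) * T a b c k‖ = (k:ℝ) * |T a b c k| := by
      rw [Real.norm_eq_abs, abs_mul, abs_of_nonneg (le_of_lt hk0)]
    rw [h1]
    have h2 : (k:ℝ) * |T a b c k| = (|T a b c k| * (k:ℝ) ^ r) * (k:ℝ) ^ (1 - r) := by
      rw [mul_assoc, ← Real.rpow_add hk0]
      norm_num
      ring
    rw [h2]
    exact mul_le_mul_of_nonneg_right hb (le_of_lt (Real.rpow_pos_of_pos hk0 _))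
  · rw [show (0:ℝ) = C * 0 by ring]
    apply Tendsto.const_mul
    have h3 : Tendsto (fun x : ℝ => x ^ (1 - r)) atTop (𝓝 0) := by
      have := tendsto_rpow_neg_atTop (by linarith : 0 < r - 1)
      simpa [neg_sub] using this
    exact h3.comp tendsto_natCast_atTop_atTop
lemma gauss_step (a b c : ℝ) (hc : 0 < c) (hcab : 0 < c - a - b) :
    c * (c - a - b) * (∑' k, T a b c k) = (c - a) * (c - b) * (∑' k, T a b (c + 1) k) := by
  have hc1 : (0:ℝ) < c + 1 := by linarith
  have hcab1 : 0 < (c + 1) - a - b := by linarith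
  have h1 : Summable (T a b c) := summable_T a b c hc hcab
  have h2 : Summable (T a b (c + 1)) := summable_T a b (c + 1) hc1 hcab1
  set u : ℕ → ℝ := fun k => c * (c - a - b) * T a b c k - (c - a) * (c - b) * T a b (c + 1) k
    with hu_def
  have hu : Summable u := (h1.mul_left _).sub (h2.mul_left _)
  have key : ∀ k : ℕ, u k =
      (fun k : ℕ => c * ((k:ℝ) * T a b c k)) k - (fun k : ℕ => c * ((k:ℝ) * T a b c k)) (k + 1) := by
    intro k
    simp only
    rw [hu_def]
    simp only
    rw [T_shift a b c hc k, T_succ a b c hc k]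
    have hck : (c + (k:ℝ)) ≠ 0 := by positivity
    have hk1 : ((k:ℝ) + 1) ≠ 0 := by positivity
    push_cast
    field_simp
    ring
  have htel : Tendsto (fun n => ∑ k ∈ range n, u k) atTop (𝓝 0) := by
    have heq : ∀ n : ℕ, ∑ k ∈ range n, u k = - (c * ((n:ℝ) * T a b c n)) := by
      intro n
      calc ∑ k ∈ range n, u k
          = ∑ k ∈ range n, ((fun k : ℕ => c * ((k:ℝ) * T a b c k)) k
            - (fun k : ℕ => c * ((k:ℝ) * T a b c k)) (k + 1)) := by
            exact Finset.sum_congr rfl fun k _ => key k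
        _ = (fun k : ℕ => c * ((k:ℝ) * T a b c k)) 0 - (fun k : ℕ => c * ((k:ℝ) * T a b c k)) n :=
            Finset.sum_range_sub' _ n
        _ = - (c * ((n:ℝ) * T a b c n)) := by simp
    rw [funext heq]  -- rewrite function
    rw [show (0:ℝ) = -(c * 0) by ring]
    exact ((tendsto_mul_T a b c hc hcab).const_mul c).neg
  have h0 : ∑' k, u k = 0 := tendsto_nhds_unique hu.hasSum.tendsto_sum_nat htel
  rw [hu_def] at h0
  rw [Summable.tsum_sub (h1.mul_left _) (h2.mul_left _), tsum_mul_left, tsum_mul_left] at h0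
  linarith

lemma gauss_iterate (a b c : ℝ) (hc : 0 < c) (hcab : 0 < c - a - b) : ∀ m : ℕ,
    (∏ n ∈ range m, ((c + n) * (c + n - a - b))) * (∑' k, T a b c k)
      = (∏ n ∈ range m, ((c + n - a) * (c + n - b))) * (∑' k, T a b (c + (m:ℝ)) k) := by
  intro m
  induction m with
  | zero => simp
  | succ m ih =>
    have hcm : (0:ℝ) < c + m := by positivity
    have hcabm : 0 < (c + (m:ℝ)) - a - b := by linarith
    have hstep := gauss_step a b (c + (m:ℝ)) hcm hcabm
    have hcast : (c + (m:ℝ)) + 1 = c + ((m + 1 : ℕ):ℝ) := by push_cast; ring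
    rw [hcast] at hstep
    rw [prod_range_succ, prod_range_succ]
    calc (∏ n ∈ range m, ((c + n) * (c + n - a - b))) * ((c + m) * (c + (m:ℝ) - a - b))
          * (∑' k, T a b c k)
        = ((∏ n ∈ range m, ((c + n) * (c + n - a - b))) * (∑' k, T a b c k))
          * ((c + m) * (c + (m:ℝ) - a - b)) := by ring
      _ = ((∏ n ∈ range m, ((c + n - a) * (c + n - b))) * (∑' k, T a b (c + (m:ℝ)) k))
          * ((c + m) * (c + (m:ℝ) - a - b)) := by rw [ih]
      _ = (∏ n ∈ range m, ((c + n - a) * (c + n - b)))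
          * ((c + (m:ℝ)) * ((c + (m:ℝ)) - a - b) * (∑' k, T a b (c + (m:ℝ)) k)) := by ring
      _ = (∏ n ∈ range m, ((c + n - a) * (c + n - b)))
          * (((c + (m:ℝ)) - a) * ((c + (m:ℝ)) - b) * (∑' k, T a b (c + ((m + 1 : ℕ):ℝ)) k)) := by
          rw [hstep]
      _ = (∏ n ∈ range m, ((c + n - a) * (c + n - b))) * ((c + (m:ℝ) - a) * (c + (m:ℝ) - b))
          * (∑' k, T a b (c + ((m + 1 : ℕ):ℝ)) k) := by ring
lemma tendsto_S_one (a b c : ℝ) (hc : 0 < c) (hcab : 0 < c - a - b) :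
    Tendsto (fun m : ℕ => ∑' k, T a b (c + (m:ℝ)) k) atTop (𝓝 1) := by
  have hc1 : (0:ℝ) < c + 1 := by linarith
  have hcab1 : 0 < (c + 1) - a - b := by linarith
  set M : ℝ := ∑' k : ℕ, |T a b (c + 1) (k + 1)| with hM_def
  have hMsum : Summable fun k : ℕ => |T a b (c + 1) (k + 1)| :=
    (summable_nat_add_iff 1).mpr (summable_abs_T a b (c + 1) hc1 hcab1)
  have hM0 : 0 ≤ M := tsum_nonneg fun k => abs_nonneg _
  -- pointwise comparison
  have hcomp : ∀ m : ℕ, 1 ≤ m → ∀ k : ℕ,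
      |T a b (c + (m:ℝ)) (k + 1)| ≤ ((c + 1) / (c + m)) * |T a b (c + 1) (k + 1)| := by
    intro m hm k
    have hm1 : (1:ℝ) ≤ (m:ℝ) := by exact_mod_cast hm
    have hcm : (0:ℝ) < c + m := by linarith
    have hkey := P_compare (x := c + 1) (y := c + (m:ℝ)) hc1 (by linarith) k
    have hP1 : 0 < P (c + 1) (k + 1) := P_pos hc1 _
    have hPm : 0 < P (c + (m:ℝ)) (k + 1) := P_pos hcm _
    have hF : (0:ℝ) < ((k + 1).factorial : ℝ) := by positivity
    rw [T, T, abs_div, abs_div, abs_of_pos (by positivity : (0:ℝ) < P (c + (m:ℝ)) (k+1) * ((k+1).factorial : ℝ)),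
      abs_of_pos (by positivity : (0:ℝ) < P (c + 1) (k+1) * ((k+1).factorial : ℝ)),
      mul_comm ((c+1)/(c+(m:ℝ))), div_mul_div_comm,
      div_le_div_iff₀ (by positivity) (by positivity)]
    have hnn : 0 ≤ |P a (k+1) * P b (k+1)| * ((k+1).factorial : ℝ) := by positivity
    calc |P a (k+1) * P b (k+1)| * (P (c+1) (k+1) * ((k+1).factorial : ℝ) * (c + (m:ℝ)))
        = ((c + (m:ℝ)) * P (c + 1) (k + 1)) * (|P a (k+1) * P b (k+1)| * ((k+1).factorial : ℝ)) := by
          ring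
      _ ≤ ((c + 1) * P (c + (m:ℝ)) (k + 1)) * (|P a (k+1) * P b (k+1)| * ((k+1).factorial : ℝ)) :=
          mul_le_mul_of_nonneg_right hkey hnn
      _ = |P a (k+1) * P b (k+1)| * (c + 1) * (P (c + (m:ℝ)) (k+1) * ((k+1).factorial : ℝ)) := by
          ring
  -- tail tends to zero
  have htail : Tendsto (fun m : ℕ => ∑' k : ℕ, T a b (c + (m:ℝ)) (k + 1)) atTop (𝓝 0) := by
    apply squeeze_zero_norm' (a := fun m : ℕ => ((c + 1) * M) * (1 / (c + (m:ℝ))))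
    · filter_upwards [eventually_ge_atTop 1] with m hm
      have hm1 : (1:ℝ) ≤ (m:ℝ) := by exact_mod_cast hm
      have hcm : (0:ℝ) < c + m := by linarith
      have hcmab : 0 < (c + (m:ℝ)) - a - b := by linarith
      have hsum_m : Summable fun k : ℕ => |T a b (c + (m:ℝ)) (k + 1)| :=
        (summable_nat_add_iff 1).mpr (summable_abs_T a b (c + (m:ℝ)) hcm hcmab)
      have h1 : ‖∑' k : ℕ, T a b (c + (m:ℝ)) (k + 1)‖ ≤ ∑' k : ℕ, |T a b (c + (m:ℝ)) (k + 1)| := by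
        have := norm_tsum_le_tsum_norm (f := fun k : ℕ => T a b (c + (m:ℝ)) (k + 1))
          (by simpa [Real.norm_eq_abs] using hsum_m)
        simpa [Real.norm_eq_abs] using this
      refine le_trans h1 ?_
      have h2 : ∑' k : ℕ, |T a b (c + (m:ℝ)) (k + 1)|
          ≤ ∑' k : ℕ, ((c + 1) / (c + m)) * |T a b (c + 1) (k + 1)| := by
        exact Summable.tsum_le_tsum (hcomp m hm) hsum_m (hMsum.mul_left _)
      rw [tsum_mul_left] at h2
      calc ∑' k : ℕ, |T a b (c + (m:ℝ)) (k + 1)| ≤ ((c + 1) / (c + m)) * M := h2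
        _ = ((c + 1) * M) * (1 / (c + (m:ℝ))) := by ring
    · rw [show (0:ℝ) = ((c + 1) * M) * 0 by ring]
      apply Tendsto.const_mul
      have h3 : Tendsto (fun m : ℕ => c + (m:ℝ)) atTop atTop :=
        tendsto_atTop_add_const_left _ c tendsto_natCast_atTop_atTop
      simpa [Pi.inv_def] using h3.inv_tendsto_atTop
  have heq : ∀ m : ℕ, ∑' k, T a b (c + (m:ℝ)) k = 1 + ∑' k : ℕ, T a b (c + (m:ℝ)) (k + 1) := by
    intro m
    have hcm : (0:ℝ) < c + m := by positivity
    have hcmab : 0 < (c + (m:ℝ)) - a - b := by linarith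
    rw [Summable.tsum_eq_zero_add (summable_T a b (c + (m:ℝ)) hcm hcmab), T_zero]
  rw [funext heq]
  have := htail.const_add (1:ℝ)
  simpa using this
lemma GammaSeq_key (s : ℝ) (hs : ∀ n : ℕ, s + n ≠ 0) (m : ℕ) (hm : 1 ≤ m) :
    Real.GammaSeq s m * ((∏ n ∈ range m, (s + n)) * (s + m)) = (m:ℝ) ^ s * m.factorial
      ∧ Real.GammaSeq s m ≠ 0 ∧ (∏ n ∈ range m, (s + n)) ≠ 0 := by
  have hm0 : (0:ℝ) < (m:ℝ) := by exact_mod_cast Nat.lt_of_lt_of_le Nat.zero_lt_one hm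
  have hPr : (∏ n ∈ range m, (s + n)) ≠ 0 := prod_ne_zero_iff.mpr fun n _ => hs n
  have hD : (∏ n ∈ range m, (s + n)) * (s + m) ≠ 0 := mul_ne_zero hPr (hs m)
  have hid : Real.GammaSeq s m * ((∏ n ∈ range m, (s + n)) * (s + m))
      = (m:ℝ) ^ s * m.factorial := by
    rw [Real.GammaSeq, prod_range_succ]
    field_simp
    exact div_self (hs m)
  refine ⟨hid, ?_, hPr⟩
  intro h0
  rw [h0, zero_mul] at hid
  have : (0:ℝ) < (m:ℝ) ^ s * m.factorial := by
    have := Real.rpow_pos_of_pos hm0 s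
    positivity
  linarith [hid ▸ this]

lemma tendsto_prod_ratio (a b c : ℝ) (hc : 0 < c) (hcab : 0 < c - a - b)
    (hca : ∀ m : ℕ, c - a ≠ -(m : ℝ)) (hcb : ∀ m : ℕ, c - b ≠ -(m : ℝ)) :
    Tendsto (fun m : ℕ => (∏ n ∈ range m, ((c + n - a) * (c + n - b)))
        / (∏ n ∈ range m, ((c + n) * (c + n - a - b)))) atTop
      (𝓝 (Real.Gamma c * Real.Gamma (c - a - b) / (Real.Gamma (c - a) * Real.Gamma (c - b)))) := by
  have hs_c : ∀ n : ℕ, c + (n:ℝ) ≠ 0 := fun n => by positivity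
  have hs_cab : ∀ n : ℕ, (c - a - b) + (n:ℝ) ≠ 0 := fun n => by positivity
  have hs_ca : ∀ n : ℕ, (c - a) + (n:ℝ) ≠ 0 := fun n => by
    intro h; exact hca n (by linarith)
  have hs_cb : ∀ n : ℕ, (c - b) + (n:ℝ) ≠ 0 := fun n => by
    intro h; exact hcb n (by linarith)
  have hGca : Real.Gamma (c - a) ≠ 0 := Real.Gamma_ne_zero hca
  have hGcb : Real.Gamma (c - b) ≠ 0 := Real.Gamma_ne_zero hcb
  -- part A
  have tendA : Tendsto (fun m : ℕ => Real.GammaSeq c m * Real.GammaSeq (c - a - b) m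
      / (Real.GammaSeq (c - a) m * Real.GammaSeq (c - b) m)) atTop
      (𝓝 (Real.Gamma c * Real.Gamma (c - a - b) / (Real.Gamma (c - a) * Real.Gamma (c - b)))) :=
    Tendsto.div ((Real.GammaSeq_tendsto_Gamma c).mul (Real.GammaSeq_tendsto_Gamma (c - a - b)))
      ((Real.GammaSeq_tendsto_Gamma (c - a)).mul (Real.GammaSeq_tendsto_Gamma (c - b)))
      (mul_ne_zero hGca hGcb)
  -- part B
  have tendB : Tendsto (fun m : ℕ =>
      ((c + m) * ((c - a - b) + m)) / (((c - a) + m) * ((c - b) + m))) atTop (𝓝 1) := by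
    have hone : ∀ x : ℝ, Tendsto (fun m : ℕ => x / (m:ℝ) + 1) atTop (𝓝 1) := by
      intro x
      have := (tendsto_const_div_atTop_nhds_zero_nat x).add_const 1
      simpa using this
    have tendB' : Tendsto (fun m : ℕ =>
        ((c / m + 1) * ((c - a - b) / m + 1)) / (((c - a) / m + 1) * ((c - b) / m + 1)))
        atTop (𝓝 1) := by
      have h := Tendsto.div (Tendsto.mul (hone c) (hone (c - a - b)))
        (Tendsto.mul (hone (c - a)) (hone (c - b))) (by norm_num)
      simpa [Pi.div_def] using h
    apply tendB'.congr'
    filter_upwards [eventually_ge_atTop 1] with m hm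
    have hm0 : (0:ℝ) < (m:ℝ) := by exact_mod_cast Nat.lt_of_lt_of_le Nat.zero_lt_one hm
    have hd2 : ((c - a) / m + 1) * ((c - b) / m + 1)
        = (((c - a) + m) * ((c - b) + m)) / ((m:ℝ) * m) := by field_simp
    have hd2ne : ((c - a) / m + 1) * ((c - b) / m + 1) ≠ 0 := by
      rw [hd2]
      exact div_ne_zero (mul_ne_zero (hs_ca m) (hs_cb m)) (by positivity)
    rw [div_eq_div_iff hd2ne (mul_ne_zero (hs_ca m) (hs_cb m))]
    field_simp
  -- main equality for m ≥ 1
  have hmain_eq : ∀ᶠ m : ℕ in atTop,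
      (Real.GammaSeq c m * Real.GammaSeq (c - a - b) m
        / (Real.GammaSeq (c - a) m * Real.GammaSeq (c - b) m))
      * (((c + m) * ((c - a - b) + m)) / (((c - a) + m) * ((c - b) + m)))
      = (∏ n ∈ range m, ((c + n - a) * (c + n - b)))
        / (∏ n ∈ range m, ((c + n) * (c + n - a - b))) := by
    filter_upwards [eventually_ge_atTop 1] with m hm
    have hm0 : (0:ℝ) < (m:ℝ) := by exact_mod_cast Nat.lt_of_lt_of_le Nat.zero_lt_one hm
    obtain ⟨id_c, gne_c, pne_c⟩ := GammaSeq_key c hs_c m hm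
    obtain ⟨id_cab, gne_cab, pne_cab⟩ := GammaSeq_key (c - a - b) hs_cab m hm
    obtain ⟨id_ca, gne_ca, pne_ca⟩ := GammaSeq_key (c - a) hs_ca m hm
    obtain ⟨id_cb, gne_cb, pne_cb⟩ := GammaSeq_key (c - b) hs_cb m hm
    have hsplitR : (∏ n ∈ range m, ((c + n - a) * (c + n - b)))
        = (∏ n ∈ range m, ((c - a) + (n:ℝ))) * (∏ n ∈ range m, ((c - b) + (n:ℝ))) := by
      rw [← prod_mul_distrib]
      exact prod_congr rfl fun n _ => by ring
    have hsplitQ : (∏ n ∈ range m, ((c + n) * (c + n - a - b)))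
        = (∏ n ∈ range m, (c + (n:ℝ))) * (∏ n ∈ range m, ((c - a - b) + (n:ℝ))) := by
      rw [← prod_mul_distrib]
      exact prod_congr rfl fun n _ => by ring
    have hrpow : (m:ℝ) ^ (c - a) * (m:ℝ) ^ (c - b) = (m:ℝ) ^ c * (m:ℝ) ^ (c - a - b) := by
      rw [← Real.rpow_add hm0, ← Real.rpow_add hm0,
        show c - a + (c - b) = c + (c - a - b) by ring]
    -- cross-multiplied main identity
    have hmain : ((∏ n ∈ range m, ((c - a) + (n:ℝ))) * (∏ n ∈ range m, ((c - b) + (n:ℝ))))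
          * (Real.GammaSeq (c - a) m * Real.GammaSeq (c - b) m)
          * (((c - a) + (m:ℝ)) * ((c - b) + (m:ℝ)))
        = (Real.GammaSeq c m * Real.GammaSeq (c - a - b) m)
          * ((c + (m:ℝ)) * ((c - a - b) + (m:ℝ)))
          * ((∏ n ∈ range m, (c + (n:ℝ))) * (∏ n ∈ range m, ((c - a - b) + (n:ℝ)))) := by
      calc ((∏ n ∈ range m, ((c - a) + (n:ℝ))) * (∏ n ∈ range m, ((c - b) + (n:ℝ))))
            * (Real.GammaSeq (c - a) m * Real.GammaSeq (c - b) m)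
            * (((c - a) + (m:ℝ)) * ((c - b) + (m:ℝ)))
          = (Real.GammaSeq (c - a) m * ((∏ n ∈ range m, ((c - a) + (n:ℝ))) * ((c - a) + (m:ℝ))))
            * (Real.GammaSeq (c - b) m * ((∏ n ∈ range m, ((c - b) + (n:ℝ))) * ((c - b) + (m:ℝ)))) := by
            ring
        _ = ((m:ℝ) ^ (c - a) * m.factorial) * ((m:ℝ) ^ (c - b) * m.factorial) := by
            rw [id_ca, id_cb]
        _ = ((m:ℝ) ^ c * m.factorial) * ((m:ℝ) ^ (c - a - b) * m.factorial) := by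
            linear_combination ((m.factorial : ℝ) * (m.factorial : ℝ)) * hrpow
        _ = (Real.GammaSeq c m * ((∏ n ∈ range m, (c + (n:ℝ))) * (c + (m:ℝ))))
            * (Real.GammaSeq (c - a - b) m
              * ((∏ n ∈ range m, ((c - a - b) + (n:ℝ))) * ((c - a - b) + (m:ℝ)))) := by
            rw [id_c, id_cab]
        _ = (Real.GammaSeq c m * Real.GammaSeq (c - a - b) m)
            * ((c + (m:ℝ)) * ((c - a - b) + (m:ℝ)))
            * ((∏ n ∈ range m, (c + (n:ℝ))) * (∏ n ∈ range m, ((c - a - b) + (n:ℝ)))) := by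
            ring
    rw [hsplitR, hsplitQ, div_mul_div_comm, div_eq_div_iff
      (mul_ne_zero (mul_ne_zero gne_ca gne_cb) (mul_ne_zero (hs_ca m) (hs_cb m)))
      (mul_ne_zero pne_c pne_cab)]
    linear_combination (-1 : ℝ) * hmain
  have := (tendA.mul tendB).congr' hmain_eq
  simpa using this
end Stmt17Aux

open Stmt17Aux Filter Topology Finset in
/-- Gauss's theorem: for real `a, b, c` with `c > 0`, `c - a - b > 0`, and `c-a`, `c-b`
not nonpositive integers, the hypergeometric series `₂F₁(a,b;c;z) = Σ (a)_k(b)_k z^k/((c)_k k!)`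
converges absolutely for `|z| ≤ 1` and `₂F₁(a,b;c;1) = Γ(c)Γ(c-a-b)/(Γ(c-a)Γ(c-b))`. -/
theorem stmt17 (a b c : ℝ) (hc : 0 < c) (hcab : 0 < c - a - b)
    (hca : ∀ m : ℕ, c - a ≠ -(m : ℝ)) (hcb : ∀ m : ℕ, c - b ≠ -(m : ℝ)) :
    (∀ z : ℝ, |z| ≤ 1 → Summable fun k : ℕ =>
      |(ascPochhammer ℝ k).eval a * (ascPochhammer ℝ k).eval b /
        ((ascPochhammer ℝ k).eval c * (k.factorial : ℝ)) * z ^ k|) ∧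
    (∑' k : ℕ, (ascPochhammer ℝ k).eval a * (ascPochhammer ℝ k).eval b /
        ((ascPochhammer ℝ k).eval c * (k.factorial : ℝ)))
      = Real.Gamma c * Real.Gamma (c - a - b) / (Real.Gamma (c - a) * Real.Gamma (c - b)) := by
  constructor
  · intro z hz
    have hs := summable_abs_T a b c hc hcab
    have hsum : Summable fun k : ℕ => |T a b c k * z ^ k| := by
      apply Summable.of_nonneg_of_le (fun k => abs_nonneg _) _ hs
      intro k
      rw [abs_mul]
      have h1 : |z ^ k| ≤ 1 := by
        rw [abs_pow]
        exact pow_le_one₀ (abs_nonneg z) hz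
      nlinarith [abs_nonneg (T a b c k), abs_nonneg (z ^ k)]
    exact hsum
  · have hiter := gauss_iterate a b c hc hcab
    have hQne : ∀ m : ℕ, (∏ n ∈ range m, ((c + n) * (c + n - a - b))) ≠ 0 := fun m =>
      prod_ne_zero_iff.mpr fun n _ =>
        mul_ne_zero (by positivity)
          (ne_of_gt (by have := (Nat.cast_nonneg n : (0:ℝ) ≤ (n:ℝ)); linarith))
    have hconst : ∀ m : ℕ, (∑' k, T a b c k)
        = ((∏ n ∈ range m, ((c + n - a) * (c + n - b)))
            / (∏ n ∈ range m, ((c + n) * (c + n - a - b)))) * (∑' k, T a b (c + (m:ℝ)) k) := by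
      intro m
      rw [div_mul_eq_mul_div, eq_div_iff (hQne m)]
      linear_combination hiter m
    have h2 : Tendsto (fun m : ℕ => ((∏ n ∈ range m, ((c + n - a) * (c + n - b)))
          / (∏ n ∈ range m, ((c + n) * (c + n - a - b)))) * (∑' k, T a b (c + (m:ℝ)) k)) atTop
        (𝓝 ((Real.Gamma c * Real.Gamma (c - a - b)
          / (Real.Gamma (c - a) * Real.Gamma (c - b))) * 1)) :=
      (tendsto_prod_ratio a b c hc hcab hca hcb).mul (tendsto_S_one a b c hc hcab)
    have h3 : (∑' k, T a b c k) = (Real.Gamma c * Real.Gamma (c - a - b)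
        / (Real.Gamma (c - a) * Real.Gamma (c - b))) * 1 :=
      tendsto_nhds_unique (tendsto_const_nhds.congr fun m => hconst m) h2
    have h4 : (∑' k, T a b c k) = Real.Gamma c * Real.Gamma (c - a - b)
        / (Real.Gamma (c - a) * Real.Gamma (c - b)) := by rw [h3]; ring
    exact h4
end
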